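/- Fix c > 0 and m > 0. Then for each sign choice ±, the map k ↦ Π±(k) from ℝ² to the 2×2 complex matrices is differentiable at every k ∈ ℝ², and for every unit vector u ∈ ℝ², the derivative of Π±(·) at k in the direction u has operator norm (as an operator on the Euclidean space ℂ²) at most c/(2 E_m(k)), and hence at most 1/(2 m c). -/

import Mathlib

open Matrix Complex

noncomputable section

/-- Pauli matrix `σ₁`. -/
def σ1 : Matrix (Fin 2) (Fin 2) ℂ := !![0, 1; 1, 0]

/-- Pauli matrix `σ₂`. -/
def σ2 : Matrix (Fin 2) (Fin 2) ℂ := !![0, -I; I, 0]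

/-- Pauli matrix `σ₃`. -/
def σ3 : Matrix (Fin 2) (Fin 2) ℂ := !![1, 0; 0, -1]

/-- `α₁ := σ₂`. -/
def α1 : Matrix (Fin 2) (Fin 2) ℂ := σ2

/-- `α₂ := -σ₁`. -/
def α2 : Matrix (Fin 2) (Fin 2) ℂ := -σ1

/-- `γ⁰ := σ₃`. -/
def γ0 : Matrix (Fin 2) (Fin 2) ℂ := σ3

/-- The 2D Dirac symbol `H_m(k) = c (k₁ α₁ + k₂ α₂) + m c² γ⁰`. -/
def diracSymbol (c m : ℝ) (k : EuclideanSpace ℝ (Fin 2)) : Matrix (Fin 2) (Fin 2) ℂ :=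
  ((c * k 0 : ℝ) : ℂ) • α1 + ((c * k 1 : ℝ) : ℂ) • α2 + ((m * c ^ 2 : ℝ) : ℂ) • γ0

/-- The relativistic dispersion `E_m(k) = √(c²‖k‖² + m²c⁴)`. -/
def Em (c m : ℝ) (k : EuclideanSpace ℝ (Fin 2)) : ℝ :=
  Real.sqrt (c ^ 2 * ‖k‖ ^ 2 + m ^ 2 * c ^ 4)

/-- The positive-energy band projector `Π₊(k) = (1/2)(I + H_m(k)/E_m(k))`. -/
def PiPlus (c m : ℝ) (k : EuclideanSpace ℝ (Fin 2)) : Matrix (Fin 2) (Fin 2) ℂ :=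
  (1 / 2 : ℂ) • ((1 : Matrix (Fin 2) (Fin 2) ℂ) + ((Em c m k : ℝ) : ℂ)⁻¹ • diracSymbol c m k)

/-- The negative-energy band projector `Π₋(k) = (1/2)(I - H_m(k)/E_m(k))`. -/
def PiMinus (c m : ℝ) (k : EuclideanSpace ℝ (Fin 2)) : Matrix (Fin 2) (Fin 2) ℂ :=
  (1 / 2 : ℂ) • ((1 : Matrix (Fin 2) (Fin 2) ℂ) - ((Em c m k : ℝ) : ℂ)⁻¹ • diracSymbol c m k)

/-- The band projectors viewed as continuous linear operators on the Hilbert space `ℂ²`,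
so that their norm is the operator norm. -/
def PiPlusCLM (c m : ℝ) (k : EuclideanSpace ℝ (Fin 2)) :
    EuclideanSpace ℂ (Fin 2) →L[ℂ] EuclideanSpace ℂ (Fin 2) :=
  Matrix.toEuclideanCLM (𝕜 := ℂ) (PiPlus c m k)

def PiMinusCLM (c m : ℝ) (k : EuclideanSpace ℝ (Fin 2)) :
    EuclideanSpace ℂ (Fin 2) →L[ℂ] EuclideanSpace ℂ (Fin 2) :=
  Matrix.toEuclideanCLM (𝕜 := ℂ) (PiMinus c m k)

/-! ### Auxiliary definitions and lemmas -/

/-- `α₁` as an operator on `ℂ²`. -/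
def A1c : EuclideanSpace ℂ (Fin 2) →L[ℂ] EuclideanSpace ℂ (Fin 2) :=
  Matrix.toEuclideanCLM (𝕜 := ℂ) α1

/-- `α₂` as an operator on `ℂ²`. -/
def A2c : EuclideanSpace ℂ (Fin 2) →L[ℂ] EuclideanSpace ℂ (Fin 2) :=
  Matrix.toEuclideanCLM (𝕜 := ℂ) α2

/-- `γ⁰` as an operator on `ℂ²`. -/
def G0c : EuclideanSpace ℂ (Fin 2) →L[ℂ] EuclideanSpace ℂ (Fin 2) :=
  Matrix.toEuclideanCLM (𝕜 := ℂ) γ0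

/-- The squared dispersion, written without norms. -/
def Qf (c m : ℝ) (k' : EuclideanSpace ℝ (Fin 2)) : ℝ :=
  c^2 * (k' 0 * k' 0 + k' 1 * k' 1) + m^2 * c^4

/-- The common form of the two band projectors (`ε = ±1`). -/
def Ff (c m ε : ℝ) (k' : EuclideanSpace ℝ (Fin 2)) :
    EuclideanSpace ℂ (Fin 2) →L[ℂ] EuclideanSpace ℂ (Fin 2) :=
  (1/2 : ℝ) • 1 + (ε*c*k' 0 * (2*Real.sqrt (Qf c m k'))⁻¹) • A1c
    + (ε*c*k' 1 * (2*Real.sqrt (Qf c m k'))⁻¹) • A2c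
    + (ε*(m*c^2) * (2*Real.sqrt (Qf c m k'))⁻¹) • G0c

theorem Qf_pos (c m : ℝ) (hc : 0 < c) (hm : 0 < m) (k' : EuclideanSpace ℝ (Fin 2)) :
    0 < Qf c m k' := by
  have h1 : 0 ≤ k' 0 * k' 0 := mul_self_nonneg _
  have h2 : 0 ≤ k' 1 * k' 1 := mul_self_nonneg _
  have h3 : 0 < m^2*c^4 := by positivity
  unfold Qf; nlinarith [sq_nonneg c]

theorem norm_sq_two (v : EuclideanSpace ℝ (Fin 2)) : ‖v‖^2 = v 0 * v 0 + v 1 * v 1 := by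
  rw [EuclideanSpace.norm_eq, Real.sq_sqrt (by positivity)]
  simp only [Fin.sum_univ_two, Real.norm_eq_abs]
  rw [_root_.sq_abs, _root_.sq_abs]
  ring

theorem Em_eq (c m : ℝ) (k : EuclideanSpace ℝ (Fin 2)) :
    Em c m k = Real.sqrt (Qf c m k) := by
  unfold Em Qf
  rw [norm_sq_two]

theorem real_coe_smul (r : ℝ) (T : EuclideanSpace ℂ (Fin 2) →L[ℂ] EuclideanSpace ℂ (Fin 2)) :
    (r:ℂ) • T = r • T := algebraMap_smul ℂ r T

/-- The matrix `d₀ α₁ + d₁ α₂ + d₂ γ⁰`. -/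
def Mmat (d0 d1 d2 : ℝ) : Matrix (Fin 2) (Fin 2) ℂ :=
  (d0:ℂ) • α1 + (d1:ℂ) • α2 + (d2:ℂ) • γ0

theorem Mmat_mul (d0 d1 d2 : ℝ) :
    (Mmat d0 d1 d2)ᴴ * (Mmat d0 d1 d2) = ((d0^2+d1^2+d2^2 : ℝ) : ℂ) • 1 := by
  ext i j
  fin_cases i <;> fin_cases j <;>
    simp [Mmat, α1, α2, γ0, σ1, σ2, σ3, Matrix.mul_apply, Fin.sum_univ_two,
      Matrix.conjTranspose_apply, Complex.ext_iff] <;>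
    constructor <;> (try simp only [← Complex.ofReal_pow, Complex.ofReal_re, Complex.ofReal_im]) <;>
    ring

theorem norm_bound (d0 d1 d2 b : ℝ) (hb : 0 ≤ b) (h : d0^2+d1^2+d2^2 ≤ b^2) :
    ‖d0 • A1c + d1 • A2c + d2 • G0c‖ ≤ b := by
  set X := d0 • A1c + d1 • A2c + d2 • G0c with hX
  have hXeq : X = Matrix.toEuclideanCLM (𝕜 := ℂ) (Mmat d0 d1 d2) := by
    rw [hX, Mmat, map_add, map_add, _root_.map_smul, _root_.map_smul, _root_.map_smul,
      real_coe_smul, real_coe_smul, real_coe_smul]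
    rfl
  have hsq : ‖X‖ * ‖X‖ = d0^2+d1^2+d2^2 := by
    rw [← CStarRing.norm_star_mul_self (x := X)]
    have h2 : star X * X = ((d0^2+d1^2+d2^2 : ℝ) : ℂ) • 1 := by
      rw [hXeq, ← map_star, ← _root_.map_mul, Matrix.star_eq_conjTranspose, Mmat_mul,
        _root_.map_smul, _root_.map_one]
    rw [h2, real_coe_smul]
    rw [norm_smul (d0^2+d1^2+d2^2) (1 : EuclideanSpace ℂ (Fin 2) →L[ℂ] EuclideanSpace ℂ (Fin 2)),
      norm_one]
    rw [mul_one, Real.norm_eq_abs, _root_.abs_of_nonneg (by positivity : (0:ℝ) ≤ d0^2+d1^2+d2^2)]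
  nlinarith [norm_nonneg X]

theorem rep_plus (c m : ℝ) (hc : 0 < c) (hm : 0 < m) (k' : EuclideanSpace ℝ (Fin 2)) :
    PiPlusCLM c m k' = Ff c m 1 k' := by
  have hQ := Qf_pos c m hc hm k'
  have hE : 0 < Real.sqrt (Qf c m k') := Real.sqrt_pos.2 hQ
  unfold PiPlusCLM PiPlus diracSymbol Ff
  rw [Em_eq]
  simp only [map_add, _root_.map_smul, _root_.map_one]
  rw [show Matrix.toEuclideanCLM (𝕜 := ℂ) α1 = A1c from rfl,
    show Matrix.toEuclideanCLM (𝕜 := ℂ) α2 = A2c from rfl,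
    show Matrix.toEuclideanCLM (𝕜 := ℂ) γ0 = G0c from rfl]
  match_scalars
  all_goals field_simp
  all_goals rfl

theorem rep_minus (c m : ℝ) (hc : 0 < c) (hm : 0 < m) (k' : EuclideanSpace ℝ (Fin 2)) :
    PiMinusCLM c m k' = Ff c m (-1) k' := by
  have hQ := Qf_pos c m hc hm k'
  have hE : 0 < Real.sqrt (Qf c m k') := Real.sqrt_pos.2 hQ
  unfold PiMinusCLM PiMinus diracSymbol Ff
  rw [Em_eq]
  simp only [map_sub, map_add, _root_.map_smul, _root_.map_one]
  rw [show Matrix.toEuclideanCLM (𝕜 := ℂ) α1 = A1c from rfl,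
    show Matrix.toEuclideanCLM (𝕜 := ℂ) α2 = A2c from rfl,
    show Matrix.toEuclideanCLM (𝕜 := ℂ) γ0 = G0c from rfl]
  match_scalars
  all_goals field_simp
  all_goals rfl

theorem scalar_ineq (c m ε E k0 k1 u0 u1 : ℝ) (hE : 0 < E)
    (hε : ε^2 = 1) (hu : u0^2 + u1^2 = 1)
    (hE2 : E^2 = c^2*(k0*k0 + k1*k1) + m^2*c^4) :
    (ε * c * k0 * (-((2 * E) ^ 2)⁻¹ * (2 * (1 / (2 * E) * (c ^ 2 * (k0 * u0 + k0 * u0 + (k1 * u1 + k1 * u1)))))) +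
        (2 * E)⁻¹ * (ε * c * u0))^2 +
      (ε * c * k1 * (-((2 * E) ^ 2)⁻¹ * (2 * (1 / (2 * E) * (c ^ 2 * (k0 * u0 + k0 * u0 + (k1 * u1 + k1 * u1)))))) +
        (2 * E)⁻¹ * (ε * c * u1))^2 +
      (ε * (m * c ^ 2) * (-((2 * E) ^ 2)⁻¹ * (2 * (1 / (2 * E) * (c ^ 2 * (k0 * u0 + k0 * u0 + (k1 * u1 + k1 * u1)))))) +
        (2 * E)⁻¹ * 0)^2
    ≤ (c / (2 * E))^2 := by
  have hE' : E ≠ 0 := ne_of_gt hE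
  have hs0 : ε * c * k0 * (-((2 * E) ^ 2)⁻¹ * (2 * (1 / (2 * E) * (c ^ 2 * (k0 * u0 + k0 * u0 + (k1 * u1 + k1 * u1)))))) +
      (2 * E)⁻¹ * (ε * c * u0)
      = ε * c * (u0 * E^2 - c^2 * k0 * (k0*u0 + k1*u1)) / (2 * E^3) := by
    field_simp; ring
  have hs1 : ε * c * k1 * (-((2 * E) ^ 2)⁻¹ * (2 * (1 / (2 * E) * (c ^ 2 * (k0 * u0 + k0 * u0 + (k1 * u1 + k1 * u1)))))) +
      (2 * E)⁻¹ * (ε * c * u1)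
      = ε * c * (u1 * E^2 - c^2 * k1 * (k0*u0 + k1*u1)) / (2 * E^3) := by
    field_simp; ring
  have hs2 : ε * (m * c ^ 2) * (-((2 * E) ^ 2)⁻¹ * (2 * (1 / (2 * E) * (c ^ 2 * (k0 * u0 + k0 * u0 + (k1 * u1 + k1 * u1)))))) +
      (2 * E)⁻¹ * 0
      = -(ε * (m * c^4) * (k0*u0 + k1*u1)) / (2 * E^3) := by
    field_simp; ring
  rw [hs0, hs1, hs2, div_pow, div_pow, div_pow, div_pow, ← add_div, ← add_div,
    div_le_div_iff₀ (by positivity) (by positivity)]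
  have key : (ε * c * (u0 * E^2 - c^2 * k0 * (k0*u0 + k1*u1)))^2
      + (ε * c * (u1 * E^2 - c^2 * k1 * (k0*u0 + k1*u1)))^2
      + (-(ε * (m * c^4) * (k0*u0 + k1*u1)))^2
      = c^2*E^4 - c^4*E^2*(k0*u0 + k1*u1)^2 := by
    linear_combination (c^2 * (u0 * E^2 - c^2 * k0 * (k0*u0 + k1*u1))^2
        + c^2 * (u1 * E^2 - c^2 * k1 * (k0*u0 + k1*u1))^2
        + m^2*c^8*(k0*u0 + k1*u1)^2) * hε
      + (c^2*E^4) * hu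
      - (c^4*(k0*u0 + k1*u1)^2) * hE2
  rw [key]
  nlinarith [sq_nonneg (c^2*E*(k0*u0+k1*u1)), sq_nonneg E, pow_pos hE 2, pow_pos hE 4, sq_nonneg c]

theorem aux_bound (c m ε : ℝ) (hc : 0 < c) (hm : 0 < m) (hε : ε^2 = 1)
    (k : EuclideanSpace ℝ (Fin 2)) (f : EuclideanSpace ℝ (Fin 2) →
      (EuclideanSpace ℂ (Fin 2) →L[ℂ] EuclideanSpace ℂ (Fin 2)))
    (hf : ∀ k', f k' = Ff c m ε k') :
    DifferentiableAt ℝ f k ∧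
      ∀ u : EuclideanSpace ℝ (Fin 2), ‖u‖ = 1 →
        ‖fderiv ℝ f k u‖ ≤ c / (2 * Em c m k) ∧
        ‖fderiv ℝ f k u‖ ≤ 1 / (2 * m * c) := by
  have hfe : f = fun k' => Ff c m ε k' := funext hf
  subst hfe
  have hQ := Qf_pos c m hc hm k
  have hE : 0 < Real.sqrt (Qf c m k) := Real.sqrt_pos.2 hQ
  have hp0 : HasFDerivAt (fun k' : EuclideanSpace ℝ (Fin 2) => k' 0)
      (EuclideanSpace.proj (𝕜 := ℝ) (0 : Fin 2)) k := by
    exact (EuclideanSpace.proj (𝕜 := ℝ) (0 : Fin 2)).hasFDerivAt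
  have hp1 : HasFDerivAt (fun k' : EuclideanSpace ℝ (Fin 2) => k' 1)
      (EuclideanSpace.proj (𝕜 := ℝ) (1 : Fin 2)) k := by
    exact (EuclideanSpace.proj (𝕜 := ℝ) (1 : Fin 2)).hasFDerivAt
  have hq : HasFDerivAt (fun k' => Qf c m k') _ k :=
    (((hp0.mul hp0).add (hp1.mul hp1)).const_mul (c^2)).add_const (m^2*c^4)
  have hsq := hq.sqrt (ne_of_gt hQ)
  have hden : HasFDerivAt (fun k' => 2 * Real.sqrt (Qf c m k')) _ k := hsq.const_mul 2
  have hne : (2 : ℝ) * Real.sqrt (Qf c m k) ≠ 0 := by positivity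
  have hw : HasFDerivAt (fun k' => (2 * Real.sqrt (Qf c m k'))⁻¹) _ k :=
    (hasDerivAt_inv hne).comp_hasFDerivAt k hden
  have hg0 : HasFDerivAt (fun k' => ε*c*k' 0 * (2*Real.sqrt (Qf c m k'))⁻¹) _ k :=
    (hp0.const_mul (ε*c)).mul hw
  have hg1 : HasFDerivAt (fun k' => ε*c*k' 1 * (2*Real.sqrt (Qf c m k'))⁻¹) _ k :=
    (hp1.const_mul (ε*c)).mul hw
  have hg2 : HasFDerivAt (fun k' => ε*(m*c^2) * (2*Real.sqrt (Qf c m k'))⁻¹) _ k :=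
    (hasFDerivAt_const (ε*(m*c^2)) k).mul hw
  have hF0 := (((hasFDerivAt_const
      ((1/2:ℝ) • (1 : EuclideanSpace ℂ (Fin 2) →L[ℂ] EuclideanSpace ℂ (Fin 2))) k).add
    (hg0.smul_const A1c)).add (hg1.smul_const A2c)).add (hg2.smul_const G0c)
  have hF : HasFDerivAt (fun k' => Ff c m ε k') _ k := hF0
  refine ⟨hF.differentiableAt, fun u hu => ?_⟩
  have hu2 : (u 0)^2 + (u 1)^2 = 1 := by
    have h := norm_sq_two u
    rw [hu] at h
    nlinarith [h]
  have hE2 : (Real.sqrt (Qf c m k))^2 = c^2*(k 0*k 0 + k 1*k 1) + m^2*c^4 := by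
    rw [Real.sq_sqrt hQ.le]; rfl
  have key : ‖fderiv ℝ (fun k' => Ff c m ε k') k u‖ ≤ c / (2 * Real.sqrt (Qf c m k)) := by
    rw [hF.fderiv]
    simp only [ContinuousLinearMap.add_apply, ContinuousLinearMap.zero_apply, zero_add,
      ContinuousLinearMap.smulRight_apply, ContinuousLinearMap.smul_apply,
      ContinuousLinearMap.coe_smul', Pi.smul_apply, smul_eq_mul,
      PiLp.proj_apply, ContinuousLinearMap.coe_add', Pi.add_apply]
    exact norm_bound _ _ _ _ (by positivity)
      (scalar_ineq c m ε (Real.sqrt (Qf c m k)) (k 0) (k 1) (u 0) (u 1) hE hε hu2 hE2)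
  have hEm : Em c m k = Real.sqrt (Qf c m k) := Em_eq c m k
  have hmc : m * c^2 ≤ Real.sqrt (Qf c m k) := by
    have h1 : (m*c^2)^2 ≤ Qf c m k := by
      unfold Qf
      nlinarith [mul_self_nonneg (k 0), mul_self_nonneg (k 1), sq_nonneg c]
    calc m * c^2 = Real.sqrt ((m*c^2)^2) := (Real.sqrt_sq (by positivity)).symm
      _ ≤ Real.sqrt (Qf c m k) := Real.sqrt_le_sqrt h1
  have h2 : c / (2 * Real.sqrt (Qf c m k)) ≤ 1 / (2 * m * c) := by
    rw [div_le_div_iff₀ (by positivity) (by positivity)]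
    nlinarith [hmc, hE, hc, hm]
  exact ⟨by rw [hEm]; exact key, key.trans h2⟩

/-- For `c > 0`, `m > 0`, the maps `k ↦ Π±(k)` are differentiable
everywhere, and the directional derivative along any unit vector `u` has operator norm
at most `c / (2 E_m(k))`, hence at most `1 / (2 m c)`. -/
theorem bandProjector_derivative_bound_massive (c m : ℝ) (hc : 0 < c) (hm : 0 < m)
    (k : EuclideanSpace ℝ (Fin 2)) :
    (DifferentiableAt ℝ (fun k' => PiPlusCLM c m k') k ∧
      ∀ u : EuclideanSpace ℝ (Fin 2), ‖u‖ = 1 →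
        ‖fderiv ℝ (fun k' => PiPlusCLM c m k') k u‖ ≤ c / (2 * Em c m k) ∧
        ‖fderiv ℝ (fun k' => PiPlusCLM c m k') k u‖ ≤ 1 / (2 * m * c)) ∧
    (DifferentiableAt ℝ (fun k' => PiMinusCLM c m k') k ∧
      ∀ u : EuclideanSpace ℝ (Fin 2), ‖u‖ = 1 →
        ‖fderiv ℝ (fun k' => PiMinusCLM c m k') k u‖ ≤ c / (2 * Em c m k) ∧
        ‖fderiv ℝ (fun k' => PiMinusCLM c m k') k u‖ ≤ 1 / (2 * m * c)) := by
  constructor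
  · exact aux_bound c m 1 hc hm (by norm_num) k _ (fun k' => rep_plus c m hc hm k')
  · exact aux_bound c m (-1) hc hm (by norm_num) k _ (fun k' => rep_minus c m hc hm k')
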